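/- Let n, k, y be integers with 1 ≤ k ≤ n, y even, 2 ≤ y, k ≤ y ≤ n, and yk/n < (log 2)/2 (log denoting natural logarithm). Then the probability that a lazy step selects between 1 and min{y/2, k} (inclusive) of the y mismatched coordinates is at least yk/(8n); that is, ∑_{i : 1 ≤ i ≤ min(y/2, k)} binom(y,i)·binom(n−y, k−i) / (2·binom(n,k)) ≥ yk/(8n). -/

import Mathlib

open Finset

/-- `pcoup n k y i` is the probability that a lazy step of the coupling is active and selects
exactly `i` of the `y` mismatched coordinates among the `k` coordinates picked:
`binom(y,i)·binom(n−y,k−i) / (2·binom(n,k))`. -/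
noncomputable def pcoup (n k y : ℕ) (i : ℕ) : ℝ :=
  ((y.choose i * (n - y).choose (k - i) : ℕ) : ℝ) / (2 * n.choose k)

/-- Lemma `lemma general`, part 5: if `k ≤ y ≤ n` and `yk/n < (log 2)/2`, the probability of
selecting between `1` and `min{y/2, k}` mismatched coordinates is at least `yk/(8n)`. -/
lemma desc_le (n y m : ℕ) (h : y + m ≤ n) :
    (n - y - m) ^ m * n.descFactorial m ≤ n ^ m * (n - y).descFactorial m := by
  rw [Nat.descFactorial_eq_prod_range, Nat.descFactorial_eq_prod_range]
  have H : ∀ i ∈ range m, (n - y - m) * (n - i) ≤ n * (n - y - i) := by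
    intro i hi
    simp only [Finset.mem_range] at hi
    zify [show y + m ≤ n from h, show i ≤ n by omega, show y + i ≤ n by omega,
      show y ≤ n by omega, show m ≤ n - y by omega, show i ≤ n - y by omega]
    nlinarith [hi.le, Nat.zero_le i, Nat.zero_le y, Nat.zero_le n]
  have := Finset.prod_le_prod' H
  simpa [Finset.prod_mul_distrib, Finset.prod_const, Finset.card_range] using this

lemma pow_bound (n y m : ℕ) (hn : 0 < n) (h : y + m ≤ n)
    (h2 : (m : ℝ) * (y + m) < 3 / 4 * n) :
    n ^ m ≤ 4 * (n - y - m) ^ m := by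
  have hc : ((n - y - m : ℕ) : ℝ) = (n : ℝ) - y - m := by
    push_cast [Nat.sub_sub, Nat.cast_sub h]; ring
  have hnR : (0 : ℝ) < n := by exact_mod_cast hn
  set t : ℝ := ((y : ℝ) + m) / n with ht
  have ht1 : t ≤ 1 := by
    rw [div_le_one hnR]; exact_mod_cast h
  have ht0 : 0 ≤ t := by positivity
  have hbern : 1 + (m : ℝ) * (-t) ≤ (1 + (-t)) ^ m := by
    apply one_add_mul_le_pow; linarith
  have hmt : (m : ℝ) * t < 3 / 4 := by
    have e : (m : ℝ) * t = (m * ((y : ℝ) + m)) / n := by rw [ht]; ring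
    rw [e, div_lt_iff₀ hnR]; linarith
  have key : (1 : ℝ) ≤ 4 * (1 - t) ^ m := by
    have h3 : (1 : ℝ) - m * t ≤ (1 - t) ^ m := by
      calc (1:ℝ) - m*t = 1 + (m:ℝ) * (-t) := by ring
        _ ≤ (1 + (-t))^m := hbern
        _ = (1 - t)^m := by ring_nf
    nlinarith
  have hcast : ((n - y - m : ℕ) : ℝ) = (n : ℝ) * (1 - t) := by
    rw [hc, ht]; field_simp; ring
  have : ((n : ℕ) : ℝ) ^ m ≤ 4 * ((n - y - m : ℕ) : ℝ) ^ m := by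
    rw [hcast, mul_pow]
    calc (n : ℝ) ^ m = (n : ℝ) ^ m * 1 := by ring
      _ ≤ (n : ℝ) ^ m * (4 * (1 - t) ^ m) := by
          apply mul_le_mul_of_nonneg_left key (by positivity)
      _ = 4 * ((n : ℝ) ^ m * (1 - t) ^ m) := by ring
  exact_mod_cast this

theorem stmt_9 (n k y : ℕ) (hk1 : 1 ≤ k) (hkn : k ≤ n) (hye : Even y) (hy2 : 2 ≤ y)
    (hky : k ≤ y) (hyn : y ≤ n) (h1 : (y : ℝ) * k / n < Real.log 2 / 2) :
    (y : ℝ) * k / (8 * n) ≤ ∑ i ∈ Finset.Icc 1 (min (y / 2) k), pcoup n k y i := by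
  have hn : 1 ≤ n := le_trans hk1 hkn
  have hnR : (0 : ℝ) < n := by exact_mod_cast hn
  have hcnk : 0 < n.choose k := Nat.choose_pos hkn
  have hlog : Real.log 2 < 3 / 4 := by
    have := Real.log_two_lt_d9; linarith
  have h2yk : 2 * (y : ℝ) * k < 3 / 4 * n := by
    rw [div_lt_div_iff₀ hnR (by norm_num)] at h1
    nlinarith
  have h2ykn : 2 * y * k < n := by
    have : (2 * y * k : ℝ) < n := by push_cast; nlinarith
    exact_mod_cast this
  have core : n.choose (k - 1) ≤ 4 * (n - y).choose (k - 1) := by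
    rcases Nat.eq_or_lt_of_le hk1 with hk | hk
    · simp [← hk]
    · set m := k - 1 with hm
      have hm1 : 1 ≤ m := by omega
      have h4y : 4 * y ≤ 2 * y * k := by
        calc 4 * y = 2 * y * 2 := by ring
          _ ≤ 2 * y * k := Nat.mul_le_mul_left _ hk
      have hymn : y + m < n := by omega
      have hbig : (m : ℝ) * (y + m) < 3 / 4 * n := by
        have hnat : m * (y + m) ≤ 2 * y * k := by
          calc m * (y + m) ≤ k * (2 * y) :=
                Nat.mul_le_mul (by omega) (by omega)
            _ = 2 * y * k := by ring
        have : (m * (y + m) : ℝ) ≤ 2 * y * k := by exact_mod_cast hnat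
        push_cast at this ⊢; nlinarith
      have hdesc := desc_le n y m hymn.le
      have hpow := pow_bound n y m (by omega) hymn.le hbig
      have hchain : (n - y - m) ^ m * n.descFactorial m
          ≤ (n - y - m) ^ m * (4 * (n - y).descFactorial m) := by
        calc (n - y - m) ^ m * n.descFactorial m
            ≤ n ^ m * (n - y).descFactorial m := hdesc
          _ ≤ 4 * (n - y - m) ^ m * (n - y).descFactorial m :=
              Nat.mul_le_mul_right _ hpow
          _ = (n - y - m) ^ m * (4 * (n - y).descFactorial m) := by ring
      have hp : 0 < (n - y - m) ^ m := by
        apply Nat.pow_pos; omega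
      have hdd : n.descFactorial m ≤ 4 * (n - y).descFactorial m :=
        Nat.le_of_mul_le_mul_left hchain hp
      rw [Nat.descFactorial_eq_factorial_mul_choose, Nat.descFactorial_eq_factorial_mul_choose]
        at hdd
      rw [show 4 * (Nat.factorial m * (n - y).choose m)
          = Nat.factorial m * (4 * (n - y).choose m) by ring] at hdd
      exact Nat.le_of_mul_le_mul_left hdd (Nat.factorial_pos m)
  have key : k * n.choose k ≤ 4 * n * (n - y).choose (k - 1) := by
    have hid : n.choose k * k = n.choose (k - 1) * (n - (k - 1)) := by
      have := Nat.choose_succ_right_eq n (k - 1)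
      rw [show k - 1 + 1 = k by omega] at this; exact this
    calc k * n.choose k = n.choose (k - 1) * (n - (k - 1)) := by rw [← hid]; ring
      _ ≤ n.choose (k - 1) * n := Nat.mul_le_mul_left _ (Nat.sub_le _ _)
      _ ≤ 4 * (n - y).choose (k - 1) * n := Nat.mul_le_mul_right _ core
      _ = 4 * n * (n - y).choose (k - 1) := by ring
  have hmem : 1 ∈ Finset.Icc 1 (min (y / 2) k) := by
    simp only [Finset.mem_Icc]; omega
  have hnonneg : ∀ i ∈ Finset.Icc 1 (min (y / 2) k), 0 ≤ pcoup n k y i := by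
    intro i _
    unfold pcoup
    positivity
  have hsingle := Finset.single_le_sum hnonneg hmem
  refine le_trans ?_ hsingle
  unfold pcoup
  rw [Nat.choose_one_right]
  rw [div_le_div_iff₀ (by positivity) (by positivity)]
  have hfin : ((y * (k * (2 * n.choose k)) : ℕ) : ℝ)
      ≤ ((y * ((n - y).choose (k - 1) * (8 * n)) : ℕ) : ℝ) := by
    exact_mod_cast Nat.mul_le_mul_left y (by nlinarith [key])
  push_cast at hfin ⊢
  nlinarith [hfin]
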